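/- Let k be a field, R = k[x], S = k[x,y]/(y² − x³), with content c defined via the free R-basis {1, y}. Then c(y)² = R but c(y²) = x³R, whose radical is xR ≠ R; hence R → S is not a weak content algebra. -/

import Mathlib

/-- The Ohm-Rush content of `f ∈ S`: the intersection of all ideals `I` of `R`
with `f ∈ IS`. -/
def orContent (R : Type*) [CommRing R] {S : Type*} [CommRing S] [Algebra R S] (f : S) :
    Ideal R :=
  sInf {I : Ideal R | f ∈ I.map (algebraMap R S)}

/-- `S` is an Ohm-Rush `R`-algebra if each `f ∈ S` lies in `c(f)S`,
i.e. there is a minimal ideal `I` with `f ∈ IS`. -/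
def IsOhmRush (R S : Type*) [CommRing R] [CommRing S] [Algebra R S] : Prop :=
  ∀ f : S, f ∈ (orContent R f).map (algebraMap R S)

/-- `S` is a McCoy `R`-algebra if whenever `f * g = 0` with `g ≠ 0`,
some nonzero `r ∈ R` annihilates the content of `f`. -/
def IsMcCoy (R S : Type*) [CommRing R] [CommRing S] [Algebra R S] : Prop :=
  ∀ f g : S, f * g = 0 → g ≠ 0 → ∃ r : R, r ≠ 0 ∧ ∀ a ∈ orContent R f, r * a = 0

/-- `S` is a weak content `R`-algebra: Ohm-Rush and `rad c(fg) = rad (c(f)c(g))`. -/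
def IsWeakContent (R S : Type*) [CommRing R] [CommRing S] [Algebra R S] : Prop :=
  IsOhmRush R S ∧ ∀ f g : S,
    (orContent R (f * g)).radical = (orContent R f * orContent R g).radical

/-- Property (A): every finitely generated ideal consisting of zero-divisors
has a nonzero annihilator. -/
def HasPropertyA (R : Type*) [CommRing R] : Prop :=
  ∀ J : Ideal R, J.FG → (∀ a ∈ J, a ∉ nonZeroDivisors R) →
    ∃ r : R, r ≠ 0 ∧ ∀ a ∈ J, a * r = 0

/-- Fidel (A): every quotient has property (A). -/
def HasFidelA (R : Type*) [CommRing R] : Prop :=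
  ∀ I : Ideal R, HasPropertyA (R ⧸ I)

/-- `S` is a semicontent `R`-algebra: faithfully flat, Ohm-Rush, and for every
multiplicative set `W ⊆ R` meeting `c(f)`, `c(fg)` and `c(g)` agree after
localizing at `W`. -/
def IsSemicontent (R S : Type*) [CommRing R] [CommRing S] [Algebra R S] : Prop :=
  Module.FaithfullyFlat R S ∧ IsOhmRush R S ∧
    ∀ (W : Submonoid R) (f g : S), (∃ w ∈ W, w ∈ orContent R f) →
      (orContent R (f * g)).map (algebraMap R (Localization W)) =
        (orContent R g).map (algebraMap R (Localization W))

/-- Membership in `I.map (algebraMap R S)` for a free algebra, via basis coordinates. -/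
theorem mem_map_algebraMap_iff_repr {R S ι : Type*} [CommRing R] [CommRing S] [Algebra R S]
    (b : Module.Basis ι R S) (I : Ideal R) (f : S) :
    f ∈ I.map (algebraMap R S) ↔ ∀ i, b.repr f i ∈ I := by
  have h : f ∈ I.map (algebraMap R S) ↔ f ∈ I • (⊤ : Submodule R S) := by
    rw [Ideal.smul_top_eq_map]; rfl
  rw [h]
  constructor
  · intro hf i
    have hle : I • (⊤ : Submodule R S) ≤
        Submodule.comap ((Finsupp.lapply i).comp b.repr.toLinearMap) I := by
      rw [Submodule.smul_le]
      intro r hr n _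
      simp only [Submodule.mem_comap, LinearMap.comp_apply, LinearEquiv.coe_toLinearMap,
        map_smul, Finsupp.lapply_apply, Finsupp.smul_apply, smul_eq_mul]
      exact Ideal.mul_mem_right _ _ hr
    exact hle hf
  · intro hf
    have := b.linearCombination_repr f
    rw [← this, Finsupp.linearCombination_apply, Finsupp.sum]
    exact Submodule.sum_mem _ fun i _ => Submodule.smul_mem_smul (hf i) trivial


open Polynomial in
theorem stmt_2 (k : Type*) [Field k] :
    (orContent (Polynomial k)
        (Ideal.Quotient.mk
          (Ideal.span {X ^ 2 - C (X ^ 3)} : Ideal (Polynomial (Polynomial k))) X)) ^ 2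
      = ⊤ ∧
    orContent (Polynomial k)
        ((Ideal.Quotient.mk
          (Ideal.span {X ^ 2 - C (X ^ 3)} : Ideal (Polynomial (Polynomial k))) X) ^ 2)
      = Ideal.span {(X : Polynomial k) ^ 3} ∧
    (Ideal.span {(X : Polynomial k) ^ 3}).radical = Ideal.span {(X : Polynomial k)} ∧
    Ideal.span {(X : Polynomial k)} ≠ ⊤ ∧
    ¬ IsWeakContent (Polynomial k)
        (Polynomial (Polynomial k) ⧸
          (Ideal.span {X ^ 2 - C (X ^ 3)} : Ideal (Polynomial (Polynomial k)))) := by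
  classical
  set p : Polynomial (Polynomial k) := X ^ 2 - C (X ^ 3) with hp
  have hm : p.Monic := by
    apply monic_X_pow_sub
    calc (C ((X : Polynomial k) ^ 3)).degree ≤ 0 := degree_C_le
    _ < 2 := by norm_num
  have hnd : p.natDegree = 2 := natDegree_X_pow_sub_C
  have hdeg : p.degree = 2 := by
    rw [degree_eq_natDegree hm.ne_zero, hnd]; rfl
  set S := AdjoinRoot p with hS
  let b : Module.Basis (Fin p.natDegree) (Polynomial k) S := (AdjoinRoot.powerBasis' hm).basis
  -- repr of mk X
  have hreprX : ∀ i : Fin p.natDegree, b.repr (AdjoinRoot.mk p X) i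
      = (X : Polynomial (Polynomial k)).coeff i := by
    intro i
    rw [show b = AdjoinRoot.powerBasisAux' hm from rfl, AdjoinRoot.powerBasisAux'_repr_apply_to_fun,
      AdjoinRoot.modByMonicHom_mk, (modByMonic_eq_self_iff hm).2]
    rw [hdeg, degree_X]; norm_num
  have hX2mod : (X ^ 2 : Polynomial (Polynomial k)) %ₘ p = C ((X : Polynomial k) ^ 3) := by
    have : (X ^ 2 : Polynomial (Polynomial k)) = p + C ((X : Polynomial k) ^ 3) := by ring
    rw [this, add_modByMonic, (modByMonic_eq_zero_iff_dvd hm).2 dvd_rfl,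
      (modByMonic_eq_self_iff hm).2, zero_add]
    calc (C ((X : Polynomial k) ^ 3)).degree ≤ 0 := degree_C_le
    _ < p.degree := by rw [hdeg]; norm_num
  have hreprX2 : ∀ i : Fin p.natDegree, b.repr ((AdjoinRoot.mk p X) ^ 2) i
      = (C ((X : Polynomial k) ^ 3)).coeff i := by
    intro i
    rw [show b = AdjoinRoot.powerBasisAux' hm from rfl, AdjoinRoot.powerBasisAux'_repr_apply_to_fun,
      show ((AdjoinRoot.mk p X) ^ 2) = AdjoinRoot.mk p (X ^ 2) from (map_pow _ _ _).symm,
      AdjoinRoot.modByMonicHom_mk, hX2mod]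
  -- membership characterizations
  have memX : ∀ I : Ideal (Polynomial k),
      (AdjoinRoot.mk p X ∈ I.map (algebraMap (Polynomial k) S)) ↔ I = ⊤ := by
    intro I
    rw [mem_map_algebraMap_iff_repr b]
    constructor
    · intro h
      have := h ⟨1, by rw [hnd]; norm_num⟩
      rw [hreprX] at this
      rw [Ideal.eq_top_iff_one]
      simpa using this
    · rintro rfl i; trivial
  have memX2 : ∀ I : Ideal (Polynomial k),
      ((AdjoinRoot.mk p X) ^ 2 ∈ I.map (algebraMap (Polynomial k) S)) ↔
        (X : Polynomial k) ^ 3 ∈ I := by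
    intro I
    rw [mem_map_algebraMap_iff_repr b]
    constructor
    · intro h
      have := h ⟨0, by rw [hnd]; norm_num⟩
      rw [hreprX2] at this
      rwa [coeff_C_zero] at this
    · intro h i
      rw [hreprX2]
      rcases i with ⟨i, hi⟩
      rw [hnd] at hi
      interval_cases i
      · rwa [coeff_C_zero]
      · rw [coeff_C]; simp
  have cX : orContent (Polynomial k) (AdjoinRoot.mk p X) = ⊤ :=
    sInf_eq_top.2 fun I hI => (memX I).1 hI
  have cX2 : orContent (Polynomial k) ((AdjoinRoot.mk p X) ^ 2)
      = Ideal.span {(X : Polynomial k) ^ 3} := by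
    apply le_antisymm
    · exact sInf_le ((memX2 _).2 (Ideal.subset_span rfl))
    · exact le_sInf fun I hI => Ideal.span_le.2 (Set.singleton_subset_iff.2 ((memX2 I).1 hI))
  have rad : (Ideal.span {(X : Polynomial k) ^ 3}).radical
      = Ideal.span {(X : Polynomial k)} := by
    rw [← Ideal.span_singleton_pow, Ideal.radical_pow _ (by norm_num : 3 ≠ 0)]
    exact ((Ideal.span_singleton_prime X_ne_zero).2 prime_X).radical
  have netop : Ideal.span {(X : Polynomial k)} ≠ ⊤ := fun h =>
    Polynomial.not_isUnit_X (Ideal.span_singleton_eq_top.1 h)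
  refine ⟨?_, cX2, rad, netop, ?_⟩
  · rw [show orContent (Polynomial k)
        (Ideal.Quotient.mk (Ideal.span {p}) X) = ⊤ from cX, Ideal.top_pow]
  · rintro ⟨-, h⟩
    have h2 := h (AdjoinRoot.mk p X) (AdjoinRoot.mk p X)
    erw [cX, Ideal.mul_top, Ideal.radical_top] at h2
    have h3 : (orContent (Polynomial k) ((AdjoinRoot.mk p X) ^ 2)).radical = ⊤ := by
      rw [pow_two]; exact h2
    rw [cX2, rad] at h3
    exact netop h3
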